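/- Let y = (y_α) be a truncated pseudo-moment sequence on ℝⁿ indexed by multi-indices of degree at most 2d with y_0 = 1, such that the moment matrix M_d(y) is positive semidefinite and y_{2d·e_i} ≤ R^{2d} for each coordinate direction e_i and some R ≥ 1. Then |y_α| ≤ R^{2d} for all α with |α| ≤ 2d. -/

import Mathlib

/-- The (truncated) moment matrix of order `d` of a pseudo-moment sequence `y` is
positive semidefinite: every quadratic form built from coefficient vectors supported on
multi-indices of degree at most `d` is nonnegative. -/
def MomMatPSD (n : ℕ) (y : (Fin n → ℕ) → ℝ) (d : ℕ) : Prop :=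
  ∀ c : (Fin n → ℕ) →₀ ℝ, (∀ α ∈ c.support, (∑ i, α i) ≤ d) →
    0 ≤ ∑ α ∈ c.support, ∑ β ∈ c.support, c α * c β * y (α + β)

open Finset

section Aux

variable {n d : ℕ} {y : (Fin n → ℕ) → ℝ}

lemma quad_ext (c : (Fin n → ℕ) →₀ ℝ) (S : Finset (Fin n → ℕ)) (hS : c.support ⊆ S) :
    ∑ α ∈ c.support, ∑ β ∈ c.support, c α * c β * y (α + β)
      = ∑ α ∈ S, ∑ β ∈ S, c α * c β * y (α + β) := by
  have h1 : ∀ α, ∑ β ∈ c.support, c α * c β * y (α + β)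
      = ∑ β ∈ S, c α * c β * y (α + β) := fun α =>
    Finset.sum_subset hS fun β _ hβ => by
      rw [Finsupp.notMem_support_iff.mp hβ]; ring
  calc ∑ α ∈ c.support, ∑ β ∈ c.support, c α * c β * y (α + β)
      = ∑ α ∈ c.support, ∑ β ∈ S, c α * c β * y (α + β) :=
        Finset.sum_congr rfl fun α _ => h1 α
    _ = ∑ α ∈ S, ∑ β ∈ S, c α * c β * y (α + β) :=
        Finset.sum_subset hS fun α _ hα => by
          apply Finset.sum_eq_zero
          intro β _
          rw [Finsupp.notMem_support_iff.mp hα]; ring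

lemma diag_nonneg (hpsd : MomMatPSD n y d) {α : Fin n → ℕ} (hα : (∑ i, α i) ≤ d) :
    0 ≤ y (α + α) := by
  have h := hpsd (Finsupp.single α 1) (fun β hβ => by
    rcases Finset.mem_singleton.mp (Finsupp.support_single_subset hβ) with rfl
    exact hα)
  rw [quad_ext (Finsupp.single α 1) {α} Finsupp.support_single_subset] at h
  simpa using h

lemma cs_ineq (hpsd : MomMatPSD n y d) {α β : Fin n → ℕ}
    (hα : (∑ i, α i) ≤ d) (hβ : (∑ i, β i) ≤ d) :
    y (α + β) ^ 2 ≤ y (α + α) * y (β + β) := by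
  by_cases hab : α = β
  · subst hab
    have := diag_nonneg hpsd hα
    nlinarith
  · have key : ∀ t : ℝ, 0 ≤ y (α + α) * t ^ 2 + (2 * y (α + β)) * t + y (β + β) := by
      intro t
      set c : (Fin n → ℕ) →₀ ℝ := Finsupp.single α t + Finsupp.single β 1 with hc
      have hsupp : c.support ⊆ {α, β} := by
        refine Finsupp.support_add.trans ?_
        apply Finset.union_subset
        · exact Finsupp.support_single_subset.trans (by intro x hx; simp at hx; simp [hx])
        · exact Finsupp.support_single_subset.trans (by intro x hx; simp at hx; simp [hx])
      have h := hpsd c (fun γ hγ => by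
        rcases Finset.mem_insert.mp (hsupp hγ) with rfl | hγ'
        · exact hα
        · rcases Finset.mem_singleton.mp hγ' with rfl; exact hβ)
      rw [quad_ext c {α, β} hsupp] at h
      have cα : c α = t := by
        simp [hc, Finsupp.single_apply, hab, Ne.symm hab]
      have cβ : c β = 1 := by
        simp [hc, Finsupp.single_apply, hab, Ne.symm hab]
      rw [Finset.sum_pair hab] at h
      rw [Finset.sum_pair hab, Finset.sum_pair hab] at h
      have comm : β + α = α + β := add_comm β α
      rw [cα, cβ, comm] at h
      nlinarith [h]
    have h2 := discrim_le_zero (a := y (α + α)) (b := 2 * y (α + β)) (c := y (β + β))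
      (fun x => by nlinarith [key x])
    rw [discrim] at h2
    nlinarith [h2]

/-- Sums of squares / values of two functions differing only at `i, j`. -/
lemma sum_two_diff {f g : Fin n → ℕ} {i j : Fin n} (hij : i ≠ j)
    (hoff : ∀ l, l ≠ i → l ≠ j → f l = g l) :
    (∑ l, f l) + g i + g j = (∑ l, g l) + f i + f j := by
  have hjmem : j ∈ (Finset.univ : Finset (Fin n)).erase i :=
    Finset.mem_erase.mpr ⟨Ne.symm hij, Finset.mem_univ j⟩
  have hsplit : ∀ h : Fin n → ℕ,
      (∑ l, h l) = h i + (h j + ∑ l ∈ ((Finset.univ).erase i).erase j, h l) := by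
    intro h
    rw [Finset.add_sum_erase _ h hjmem, Finset.add_sum_erase _ h (Finset.mem_univ i)]
  have htail : ∑ l ∈ ((Finset.univ).erase i).erase j, f l
      = ∑ l ∈ ((Finset.univ).erase i).erase j, g l := by
    apply Finset.sum_congr rfl
    intro l hl
    have h1 := Finset.mem_erase.mp hl
    have h2 := Finset.mem_erase.mp h1.2
    exact hoff l h2.1 h1.1
  rw [hsplit f, hsplit g, htail]
  omega

lemma hankel_bound (hpsd : MomMatPSD n y d) (hy0 : y 0 = 1) {R : ℝ} (hR : 1 ≤ R)
    (i : Fin n) (hd : y (Pi.single i (2 * d)) ≤ R ^ (2 * d)) :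
    ∀ j ≤ d, y (Pi.single i (2 * j)) ≤ R ^ (2 * d) := by
  set T : ℝ := R ^ (2 * d) with hT
  have hT1 : (1 : ℝ) ≤ T := one_le_pow₀ hR
  set h : ℕ → ℝ := fun j => y (Pi.single i (2 * j)) with hh
  have hsing : ∀ k : ℕ, (∑ l, Pi.single i k l) = k := by intro k; simp
  have hdouble : ∀ k : ℕ, (Pi.single i (2 * k) : Fin n → ℕ) = Pi.single i k + Pi.single i k := by
    intro k
    rw [← Pi.single_add, two_mul]
  have h0 : h 0 = 1 := by
    simp only [hh, Nat.mul_zero]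
    rw [show (Pi.single i 0 : Fin n → ℕ) = 0 from Pi.single_zero i]
    exact hy0
  have hnn : ∀ j ≤ d, 0 ≤ h j := by
    intro j hj
    rw [hh]
    simp only
    rw [hdouble j]
    exact diag_nonneg hpsd (by rw [hsing j]; exact hj)
  have hconv : ∀ m, m + 2 ≤ d → h (m + 1) ^ 2 ≤ h m * h (m + 2) := by
    intro m hm
    have e1 : (Pi.single i (2 * (m + 1)) : Fin n → ℕ) = Pi.single i m + Pi.single i (m + 2) := by
      rw [show 2 * (m + 1) = m + (m + 2) by ring, Pi.single_add]
    have := cs_ineq hpsd (α := Pi.single i m) (β := Pi.single i (m + 2))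
      (by rw [hsing]; omega) (by rw [hsing]; omega)
    rw [← e1, ← hdouble m, ← hdouble (m + 2)] at this
    exact this
  -- max argument
  intro j hj
  set S := Finset.range (d + 1) with hS
  obtain ⟨j₁, hj₁S, hj₁max⟩ := S.exists_max_image h ⟨0, by simp [hS]⟩
  set P := S.filter (fun l => ∀ m ∈ S, h m ≤ h l) with hP
  have hPne : P.Nonempty := ⟨j₁, Finset.mem_filter.mpr ⟨hj₁S, hj₁max⟩⟩
  set j₀ := P.min' hPne with hj₀
  have hj₀P : j₀ ∈ P := P.min'_mem hPne
  obtain ⟨hj₀S, hj₀max⟩ := Finset.mem_filter.mp hj₀P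
  have hj₀d : j₀ ≤ d := by
    have := Finset.mem_range.mp hj₀S; omega
  have hupper : h j ≤ h j₀ := hj₀max j (Finset.mem_range.mpr (by omega))
  rcases Nat.eq_zero_or_pos j₀ with hz | hpos
  · rw [hz, h0] at hupper; linarith
  rcases eq_or_lt_of_le hj₀d with hdd | hlt
  · rw [hdd] at hupper
    calc h j ≤ h d := hupper
      _ ≤ T := hd
  · exfalso
    obtain ⟨m, hjm⟩ : ∃ m, j₀ = m + 1 := ⟨j₀ - 1, by omega⟩
    have hm2 : m + 2 ≤ d := by omega
    have hc := hconv m hm2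
    have h1 : h (m + 2) ≤ h (m + 1) := by
      have := hj₀max (m + 2) (Finset.mem_range.mpr (by omega))
      rwa [hjm] at this
    have h2 : 0 ≤ h m := hnn m (by omega)
    have h3 : (1 : ℝ) ≤ h (m + 1) := by
      have := hj₀max 0 (Finset.mem_range.mpr (by omega))
      rw [h0, hjm] at this; exact this
    have h4 : h (m + 1) ≤ h m := by nlinarith
    have hmP : m ∈ P := Finset.mem_filter.mpr ⟨Finset.mem_range.mpr (by omega),
      fun l hl => le_trans (hj₀max l hl) (by rw [hjm]; exact h4)⟩
    have := P.min'_le m hmP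
    omega

/-- A partial splitting: given a budget `m ≤ ∑ α`, we can split off `β ≤ α` with `∑ β = m`. -/
lemma exists_le_sum : ∀ {n : ℕ} (α : Fin n → ℕ) (m : ℕ), m ≤ ∑ i, α i →
    ∃ β : Fin n → ℕ, (∀ i, β i ≤ α i) ∧ (∑ i, β i) = m := by
  intro n
  induction n with
  | zero =>
    intro α m hm
    simp only [Finset.univ_eq_empty, Finset.sum_empty] at hm
    refine ⟨fun i => 0, fun i => i.elim0, ?_⟩
    simp; omega
  | succ k ih =>
    intro α m hm
    rw [Fin.sum_univ_succ] at hm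
    by_cases hc : m ≤ α 0
    · refine ⟨Fin.cons m 0, ?_, ?_⟩
      · intro i
        refine Fin.cases ?_ ?_ i
        · simpa using hc
        · intro l; simp
      · rw [Fin.sum_univ_succ]; simp
    · obtain ⟨β', h1, h2⟩ := ih (fun i => α i.succ) (m - α 0) (by show m - α 0 ≤ ∑ i : Fin k, α i.succ; omega)
      refine ⟨Fin.cons (α 0) β', ?_, ?_⟩
      · intro i
        refine Fin.cases ?_ ?_ i
        · simp
        · intro l; simpa using h1 l
      · rw [Fin.sum_univ_succ]
        simp only [Fin.cons_zero, Fin.cons_succ]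
        rw [h2]; omega

lemma diag_bound (hpsd : MomMatPSD n y d) (hy0 : y 0 = 1) {R : ℝ} (hR : 1 ≤ R)
    (hdiag : ∀ i : Fin n, y (Pi.single i (2 * d)) ≤ R ^ (2 * d)) :
    ∀ α : Fin n → ℕ, (∑ i, α i) ≤ d → y (α + α) ≤ R ^ (2 * d) := by
  classical
  intro α hα
  set T : ℝ := R ^ (2 * d) with hT
  have hT1 : (1 : ℝ) ≤ T := one_le_pow₀ hR
  set k := ∑ i, α i with hk
  by_cases hk0 : k = 0
  · have hα0 : α = 0 := by
      funext i
      have := Finset.sum_eq_zero_iff.mp (hk ▸ hk0 : (∑ i, α i) = 0) i (Finset.mem_univ i)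
      simpa using this
    rw [hα0]
    simpa [hy0] using hT1
  -- k ≥ 1
  set A : Finset (Fin n → ℕ) :=
    ((Finset.univ : Finset (Fin n → Fin (k + 1))).image
      (fun f j => (f j : ℕ))).filter (fun β => (∑ i, β i) = k) with hA
  have memA : ∀ β : Fin n → ℕ, (∑ i, β i) = k → β ∈ A := by
    intro β hβ
    refine Finset.mem_filter.mpr ⟨Finset.mem_image.mpr ⟨fun j => ⟨β j, ?_⟩, Finset.mem_univ _, rfl⟩, hβ⟩
    have : β j ≤ k := hβ ▸ Finset.single_le_sum (fun _ _ => Nat.zero_le _) (Finset.mem_univ j)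
    omega
  have hAsum : ∀ β ∈ A, (∑ i, β i) = k := fun β hβ => (Finset.mem_filter.mp hβ).2
  have hαA : α ∈ A := memA α rfl
  obtain ⟨δ₁, hδ₁A, hδ₁max⟩ := A.exists_max_image (fun β => y (β + β)) ⟨α, hαA⟩
  set B := A.filter (fun β => ∀ γ ∈ A, y (γ + γ) ≤ y (β + β)) with hB
  have hδ₁B : δ₁ ∈ B := Finset.mem_filter.mpr ⟨hδ₁A, hδ₁max⟩
  obtain ⟨δ, hδB, hδmax⟩ := B.exists_max_image (fun β => ∑ i, (β i) ^ 2) ⟨δ₁, hδ₁B⟩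
  obtain ⟨hδA, hδtop⟩ := Finset.mem_filter.mp hδB
  have hδsum : (∑ i, δ i) = k := hAsum δ hδA
  have hkd : k ≤ d := hα
  suffices hTd : y (δ + δ) ≤ T from le_trans (hδtop α hαA) hTd
  by_contra hcon
  push_neg at hcon
  by_cases hcorner : ∃ i, δ i = k
  · obtain ⟨i, hi⟩ := hcorner
    have hδsingle : δ = Pi.single i k := by
      funext l
      by_cases hl : l = i
      · subst hl; simp [Pi.single_apply, hi]
      · have hpair : δ i + δ l ≤ k := by
          rw [← hδsum]
          rw [show δ i + δ l = ∑ m ∈ ({i, l} : Finset (Fin n)), δ m from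
            (Finset.sum_pair (Ne.symm hl)).symm]
          exact Finset.sum_le_sum_of_subset (Finset.subset_univ _)
        have hl0 : δ l = 0 := by omega
        simp [Pi.single_apply, hl, hl0]
    have hhank := hankel_bound hpsd hy0 hR i (hdiag i) k hkd
    rw [hδsingle] at hcon
    have e : (Pi.single i k + Pi.single i k : Fin n → ℕ) = Pi.single i (2 * k) := by
      rw [← Pi.single_add, two_mul]
    rw [e] at hcon
    linarith
  · push_neg at hcorner
    have huniv : (Finset.univ : Finset (Fin n)).Nonempty := by
      by_contra hne
      rw [Finset.not_nonempty_iff_eq_empty] at hne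
      rw [hne, Finset.sum_empty] at hδsum
      omega
    obtain ⟨i, _, himax⟩ := Finset.exists_max_image Finset.univ δ huniv
    have hipos : 1 ≤ δ i := by
      by_contra hip
      push_neg at hip
      have : (∑ l, δ l) = 0 := Finset.sum_eq_zero fun l _ => by
        have := himax l (Finset.mem_univ l); omega
      omega
    obtain ⟨j, hji, hjpos⟩ : ∃ j, j ≠ i ∧ 1 ≤ δ j := by
      by_contra hno
      push_neg at hno
      have : (∑ l, δ l) = δ i := Finset.sum_eq_single i
        (fun l _ hl => by have := hno l hl; omega)
        (fun hni => absurd (Finset.mem_univ i) hni)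
      exact hcorner i (by omega)
    have hij : δ j ≤ δ i := himax j (Finset.mem_univ j)
    have hijne : i ≠ j := Ne.symm hji
    set β : Fin n → ℕ := fun l => if l = i then δ i + 1 else if l = j then δ l - 1 else δ l
      with hβdef
    set γ : Fin n → ℕ := fun l => if l = i then δ i - 1 else if l = j then δ l + 1 else δ l
      with hγdef
    have hβi : β i = δ i + 1 := by simp [hβdef]
    have hβj : β j = δ j - 1 := by simp [hβdef, hji]
    have hγi : γ i = δ i - 1 := by simp [hγdef]
    have hγj : γ j = δ j + 1 := by simp [hγdef, hji]
    have hβoff : ∀ l, l ≠ i → l ≠ j → β l = δ l := by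
      intro l h1 h2; simp [hβdef, h1, h2]
    have hγoff : ∀ l, l ≠ i → l ≠ j → γ l = δ l := by
      intro l h1 h2; simp [hγdef, h1, h2]
    have hβγ : β + γ = δ + δ := by
      funext l
      simp only [Pi.add_apply]
      by_cases h1 : l = i
      · subst h1; rw [hβi, hγi]; omega
      · by_cases h2 : l = j
        · subst h2; rw [hβj, hγj]; omega
        · rw [hβoff l h1 h2, hγoff l h1 h2]
    have hβsum : (∑ l, β l) = k := by
      have := sum_two_diff (f := β) (g := δ) hijne hβoff
      rw [hδsum, hβi, hβj] at this
      omega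
    have hγsum : (∑ l, γ l) = k := by
      have := sum_two_diff (f := γ) (g := δ) hijne hγoff
      rw [hδsum, hγi, hγj] at this
      omega
    have hβA := memA β hβsum
    have hγA := memA γ hγsum
    have hcs := cs_ineq hpsd (α := β) (β := γ) (by rw [hβsum]; exact hkd)
      (by rw [hγsum]; exact hkd)
    rw [hβγ] at hcs
    have h1 : y (γ + γ) ≤ y (δ + δ) := hδtop γ hγA
    have h2 : y (β + β) ≤ y (δ + δ) := hδtop β hβA
    have h3 : 0 ≤ y (β + β) := diag_nonneg hpsd (by rw [hβsum]; exact hkd)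
    have h4 : 0 ≤ y (γ + γ) := diag_nonneg hpsd (by rw [hγsum]; exact hkd)
    have hpos : 0 < y (δ + δ) := by linarith
    have h5 : y (δ + δ) ≤ y (β + β) := by nlinarith
    have hβB : β ∈ B := Finset.mem_filter.mpr ⟨hβA, fun γ' hγ' => le_trans (hδtop γ' hγ') h5⟩
    have hΦ := hδmax β hβB
    have hsq := sum_two_diff (f := fun l => (β l) ^ 2) (g := fun l => (δ l) ^ 2) hijne
      (fun l ha hb => by simp only [hβoff l ha hb])
    simp only [hβi, hβj] at hsq
    -- (δ i + 1)^2 + (δ j - 1)^2 > δ i ^2 + δ j ^2 since δ j ≤ δ i, 1 ≤ δ j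
    obtain ⟨b, hb⟩ : ∃ b, δ j = b + 1 := ⟨δ j - 1, by omega⟩
    rw [hb] at hsq
    simp only [Nat.add_sub_cancel] at hsq
    rw [hb] at hij
    have e1 : (b + 1) ^ 2 = b ^ 2 + 2 * b + 1 := by ring
    have e2 : (δ i + 1) ^ 2 = δ i ^ 2 + 2 * δ i + 1 := by ring
    omega

end Aux

theorem psd_moment_sequence_bound (n d : ℕ) (R : ℝ) (hR : 1 ≤ R)
    (y : (Fin n → ℕ) → ℝ) (hy0 : y 0 = 1)
    (hdiag : ∀ i : Fin n, y (Pi.single i (2 * d)) ≤ R ^ (2 * d))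
    (hpsd : MomMatPSD n y d) :
    ∀ α : Fin n → ℕ, (∑ i, α i) ≤ 2 * d → |y α| ≤ R ^ (2 * d) := by
  intro α hα
  obtain ⟨β, hβle, hβsum⟩ := exists_le_sum α (min (∑ i, α i) d) (min_le_left _ _)
  set γ : Fin n → ℕ := fun i => α i - β i with hγdef
  have hβγ : β + γ = α := by
    funext i
    simp only [Pi.add_apply, hγdef]
    have := hβle i
    omega
  have hsum : (∑ i, β i) + (∑ i, γ i) = ∑ i, α i := by
    rw [← Finset.sum_add_distrib]
    exact Finset.sum_congr rfl fun i _ => congrFun hβγ i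
  have hβd : (∑ i, β i) ≤ d := by rw [hβsum]; exact min_le_right _ _
  have hγd : (∑ i, γ i) ≤ d := by omega
  have hcs := cs_ineq hpsd hβd hγd
  rw [hβγ] at hcs
  have b1 := diag_bound hpsd hy0 hR hdiag β hβd
  have b2 := diag_bound hpsd hy0 hR hdiag γ hγd
  have nn1 := diag_nonneg hpsd hβd
  have nn2 := diag_nonneg hpsd hγd
  have hT1 : (1 : ℝ) ≤ R ^ (2 * d) := one_le_pow₀ hR
  nlinarith [abs_nonneg (y α), sq_abs (y α), hcs, b1, b2, nn1, nn2, hT1]
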